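/- Let L be a countable group and let ρ₀, ρ₁ : L → Homeo_ℤ(ℝ) be group homomorphisms, where Homeo_ℤ(ℝ) is the group of orientation-preserving homeomorphisms f of ℝ satisfying f(x+1) = f(x)+1 for all x (the group of units of the monoid CircleDeg1Lift of monotone degree-one maps). Then the following are equivalent: (i) there exists a monotone degree-one map h ∈ CircleDeg1Lift (not assumed continuous, surjective, or injective) such that h ∘ ρ₀(g) = ρ₁(g) ∘ h for all g ∈ L; (ii) there exist a homomorphism ρ : L → Homeo_ℤ(ℝ) and surjective monotone degree-one maps h₀, h₁ ∈ CircleDeg1Lift such that hᵢ ∘ ρ(g) = ρᵢ(g) ∘ hᵢ for all g ∈ L and i = 0, 1. -/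

import Mathlib

open Set

namespace CircleDeg1LiftBlowup

noncomputable def HH (h : CircleDeg1Lift) (s : ℝ) : ℝ := sSup {x | x + h x ≤ s}

variable (h : CircleDeg1Lift)

lemma le_map (x : ℝ) : h 0 + x - 1 ≤ h x := by
  have h1 : h ((⌊x⌋ : ℤ) : ℝ) ≤ h x := h.mono (Int.floor_le x)
  have h2 : h ((⌊x⌋ : ℤ) : ℝ) = h 0 + ⌊x⌋ := h.map_int_of_map_zero _
  have h3 : x - 1 < ((⌊x⌋ : ℤ) : ℝ) := Int.sub_one_lt_floor x
  linarith

lemma map_le (x : ℝ) : h x ≤ h 0 + x + 1 := by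
  have h1 : h x ≤ h ((⌈x⌉ : ℤ) : ℝ) := h.mono (Int.le_ceil x)
  have h2 : h ((⌈x⌉ : ℤ) : ℝ) = h 0 + ⌈x⌉ := h.map_int_of_map_zero _
  have h3 : ((⌈x⌉ : ℤ) : ℝ) < x + 1 := Int.ceil_lt_add_one x
  linarith

lemma S_nonempty (s : ℝ) : {x : ℝ | x + h x ≤ s}.Nonempty := by
  refine ⟨min 0 (s - h 0), ?_⟩
  have h1 : h (min 0 (s - h 0)) ≤ h 0 := h.mono (min_le_left _ _)
  have h2 : min 0 (s - h 0) ≤ s - h 0 := min_le_right _ _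
  simp only [Set.mem_setOf_eq]; linarith

lemma S_bddAbove (s : ℝ) : BddAbove {x : ℝ | x + h x ≤ s} := by
  refine ⟨(s + 1 - h 0) / 2, fun x hx => ?_⟩
  have := le_map h x
  simp only [Set.mem_setOf_eq] at hx
  linarith

lemma le_HH_of_mem {s x : ℝ} (hx : x + h x ≤ s) : x ≤ HH h s :=
  le_csSup (S_bddAbove h s) hx

lemma HH_mono : Monotone (HH h) := fun s s' hss =>
  csSup_le_csSup (S_bddAbove h s') (S_nonempty h s) fun x hx => le_trans hx hss

lemma mem_of_lt_HH {s x : ℝ} (hx : x < HH h s) : x + h x ≤ s := by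
  obtain ⟨z, hz, hxz⟩ := exists_lt_of_lt_csSup (S_nonempty h s) hx
  have h1 : h x ≤ h z := h.mono hxz.le
  have h2 : z + h z ≤ s := hz
  linarith

lemma lt_of_HH_lt {s x : ℝ} (hx : HH h s < x) : s < x + h x := by
  by_contra hc; push_neg at hc
  exact absurd (le_csSup (S_bddAbove h s) hc) (not_le.2 hx)

lemma HH_lipschitz {s s' : ℝ} (hss : s ≤ s') : HH h s' ≤ HH h s + (s' - s) := by
  refine csSup_le (S_nonempty h s') fun x hx => ?_
  have hx' : x + h x ≤ s' := hx
  have hmono : h (x - (s' - s)) ≤ h x := h.mono (by linarith)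
  have hmem : (x - (s' - s)) + h (x - (s' - s)) ≤ s := by linarith
  have := le_HH_of_mem h hmem
  linarith

lemma HH_add_two (s : ℝ) : HH h (s + 2) = HH h s + 1 := by
  apply le_antisymm
  · refine csSup_le (S_nonempty h (s + 2)) fun x hx => ?_
    have hx' : x + h x ≤ s + 2 := hx
    have h1 : h (x - 1 + 1) = h (x - 1) + 1 := h.map_add_one _
    have e : x - 1 + 1 = x := by ring
    rw [e] at h1
    have hmem : (x - 1) + h (x - 1) ≤ s := by linarith
    have := le_HH_of_mem h hmem
    linarith
  · have key : HH h s ≤ HH h (s + 2) - 1 := by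
      refine csSup_le (S_nonempty h s) fun x hx => ?_
      have hx' : x + h x ≤ s := hx
      have h1 : h (x + 1) = h x + 1 := h.map_add_one _
      have hmem : (x + 1) + h (x + 1) ≤ s + 2 := by linarith
      have := le_HH_of_mem h hmem
      linarith
    linarith

lemma HH_map (x : ℝ) : HH h (x + h x) = x := by
  apply le_antisymm
  · refine csSup_le (S_nonempty h _) fun z hz => ?_
    have hz' : z + h z ≤ x + h x := hz
    by_contra hc; push_neg at hc
    have := h.mono hc.le
    linarith
  · exact le_csSup (S_bddAbove h _) (le_refl (x + h x))

def Gam (h : CircleDeg1Lift) (x y : ℝ) : Prop :=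
  (∀ x' < x, h x' ≤ y) ∧ ∀ x', x < x' → y ≤ h x'

lemma gam_HH_eq {x y : ℝ} (hxy : Gam h x y) : HH h (x + y) = x := by
  apply le_antisymm
  · refine csSup_le ⟨x - 1, ?_⟩ fun z hz => ?_
    · have := hxy.1 (x - 1) (by linarith)
      simp only [Set.mem_setOf_eq]; linarith
    · have hz' : z + h z ≤ x + y := hz
      by_contra hc; push_neg at hc
      have := hxy.2 z hc
      linarith
  · refine le_of_forall_pos_le_add fun ε hε => ?_
    have h1 := hxy.1 (x - ε) (by linarith)
    have hmem : (x - ε) + h (x - ε) ≤ x + y := by linarith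
    have := le_HH_of_mem h hmem
    linarith

lemma gam_HH (s : ℝ) : Gam h (HH h s) (s - HH h s) := by
  constructor
  · intro x' hx'
    by_contra hc; push_neg at hc
    set u := max x' ((s - h x' + HH h s) / 2) with hu
    have hu1 : u < HH h s := max_lt hx' (by linarith)
    have hu2 : u + h u ≤ s := mem_of_lt_HH h hu1
    have hu3 : h x' ≤ h u := h.mono (le_max_left _ _)
    have hu4 : s - h x' < u := lt_of_lt_of_le (by linarith) (le_max_right _ _)
    linarith
  · intro x' hx'
    by_contra hc; push_neg at hc
    set u := min x' ((s - h x' + HH h s) / 2) with hu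
    have hu1 : HH h s < u := lt_min hx' (by linarith)
    have hu2 : s < u + h u := lt_of_HH_lt h hu1
    have hu3 : h u ≤ h x' := h.mono (min_le_left _ _)
    have hu4 : u < s - h x' := lt_of_le_of_lt (min_le_right _ _) (by linarith)
    linarith

lemma gam_conj {x y : ℝ} (g₀ g₁ : CircleDeg1Liftˣ)
    (hsc : ∀ z, h ((g₀ : CircleDeg1Lift) z) = (g₁ : CircleDeg1Lift) (h z))
    (hxy : Gam h x y) :
    Gam h ((g₀ : CircleDeg1Lift) x) ((g₁ : CircleDeg1Lift) y) := by
  constructor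
  · intro x' hx'
    have h1 : ((g₀⁻¹ : CircleDeg1Liftˣ) : CircleDeg1Lift) x' ≤ x := by
      have := ((g₀⁻¹ : CircleDeg1Liftˣ) : CircleDeg1Lift).mono hx'.le
      rwa [CircleDeg1Lift.units_inv_apply_apply] at this
    have h2 : ((g₀⁻¹ : CircleDeg1Liftˣ) : CircleDeg1Lift) x' < x := by
      rcases h1.lt_or_eq with h2 | h2
      · exact h2
      · exfalso
        have h3 := congrArg (⇑(g₀ : CircleDeg1Lift)) h2
        rw [CircleDeg1Lift.units_apply_inv_apply] at h3
        exact absurd h3 (ne_of_lt hx')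
    calc h x' = h ((g₀ : CircleDeg1Lift) (((g₀⁻¹ : CircleDeg1Liftˣ) : CircleDeg1Lift) x')) := by
          rw [CircleDeg1Lift.units_apply_inv_apply]
      _ = (g₁ : CircleDeg1Lift) (h (((g₀⁻¹ : CircleDeg1Liftˣ) : CircleDeg1Lift) x')) := hsc _
      _ ≤ (g₁ : CircleDeg1Lift) y := (g₁ : CircleDeg1Lift).mono (hxy.1 _ h2)
  · intro x' hx'
    have h1 : x ≤ ((g₀⁻¹ : CircleDeg1Liftˣ) : CircleDeg1Lift) x' := by
      have := ((g₀⁻¹ : CircleDeg1Liftˣ) : CircleDeg1Lift).mono hx'.le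
      rwa [CircleDeg1Lift.units_inv_apply_apply] at this
    have h2 : x < ((g₀⁻¹ : CircleDeg1Liftˣ) : CircleDeg1Lift) x' := by
      rcases h1.lt_or_eq with h2 | h2
      · exact h2
      · exfalso
        have h3 := congrArg (⇑(g₀ : CircleDeg1Lift)) h2
        rw [CircleDeg1Lift.units_apply_inv_apply] at h3
        exact absurd h3.symm (ne_of_gt hx')
    calc (g₁ : CircleDeg1Lift) y ≤ (g₁ : CircleDeg1Lift) (h (((g₀⁻¹ : CircleDeg1Liftˣ) : CircleDeg1Lift) x')) :=
          (g₁ : CircleDeg1Lift).mono (hxy.2 _ h2)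
      _ = h ((g₀ : CircleDeg1Lift) (((g₀⁻¹ : CircleDeg1Liftˣ) : CircleDeg1Lift) x')) := (hsc _).symm
      _ = h x' := by rw [CircleDeg1Lift.units_apply_inv_apply]

lemma exists_gam (y : ℝ) : ∃ x, Gam h x y := by
  have hne : {x' : ℝ | h x' ≤ y}.Nonempty := by
    refine ⟨y - h 0 - 1, ?_⟩
    have := map_le h (y - h 0 - 1)
    simp only [Set.mem_setOf_eq]; linarith
  have hbdd : BddAbove {x' : ℝ | h x' ≤ y} := by
    refine ⟨y - h 0 + 1, fun x hx => ?_⟩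
    have h1 := le_map h x
    have hx' : h x ≤ y := hx
    linarith
  refine ⟨sSup {x' | h x' ≤ y}, fun x' hx' => ?_, fun x' hx' => ?_⟩
  · obtain ⟨z, hz, hz'⟩ := exists_lt_of_lt_csSup hne hx'
    exact le_trans (h.mono hz'.le) hz
  · by_contra hc; push_neg at hc
    exact absurd (le_csSup hbdd hc.le) (not_le.2 hx')

noncomputable def bup0 (h : CircleDeg1Lift) : CircleDeg1Lift :=
  ⟨⟨fun t => HH h (2 * t), fun a b hab => HH_mono h (by linarith)⟩, fun t => by
    show HH h (2 * (t + 1)) = HH h (2 * t) + 1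
    rw [show 2 * (t + 1) = 2 * t + 2 by ring, HH_add_two]⟩

noncomputable def bup1 (h : CircleDeg1Lift) : CircleDeg1Lift :=
  ⟨⟨fun t => 2 * t - HH h (2 * t), fun a b hab => by
      have := HH_lipschitz h (show 2 * a ≤ 2 * b by linarith)
      simp only []; linarith⟩, fun t => by
    show 2 * (t + 1) - HH h (2 * (t + 1)) = 2 * t - HH h (2 * t) + 1
    rw [show 2 * (t + 1) = 2 * t + 2 by ring, HH_add_two]; ring⟩

@[simp] lemma bup0_apply (t : ℝ) : bup0 h t = HH h (2 * t) := rfl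

@[simp] lemma bup1_apply (t : ℝ) : bup1 h t = 2 * t - HH h (2 * t) := rfl

noncomputable def bupr (h : CircleDeg1Lift) (g₀ g₁ : CircleDeg1Liftˣ) : CircleDeg1Lift :=
  ⟨⟨fun t => ((g₀ : CircleDeg1Lift) (HH h (2 * t)) + (g₁ : CircleDeg1Lift) (2 * t - HH h (2 * t))) / 2,
    fun a b hab => by
      have h1 := (g₀ : CircleDeg1Lift).mono (HH_mono h (show 2 * a ≤ 2 * b by linarith))
      have h2 := (g₁ : CircleDeg1Lift).mono
        (show 2 * a - HH h (2 * a) ≤ 2 * b - HH h (2 * b) by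
          have := HH_lipschitz h (show 2 * a ≤ 2 * b by linarith); linarith)
      simp only []; linarith⟩, fun t => by
    show ((g₀ : CircleDeg1Lift) (HH h (2 * (t + 1))) + (g₁ : CircleDeg1Lift) (2 * (t + 1) - HH h (2 * (t + 1)))) / 2
        = ((g₀ : CircleDeg1Lift) (HH h (2 * t)) + (g₁ : CircleDeg1Lift) (2 * t - HH h (2 * t))) / 2 + 1
    rw [show 2 * (t + 1) = 2 * t + 2 by ring, HH_add_two,
      show 2 * t + 2 - (HH h (2 * t) + 1) = (2 * t - HH h (2 * t)) + 1 by ring,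
      (g₀ : CircleDeg1Lift).map_add_one, (g₁ : CircleDeg1Lift).map_add_one]
    ring⟩

@[simp] lemma bupr_apply (g₀ g₁ : CircleDeg1Liftˣ) (t : ℝ) :
    bupr h g₀ g₁ t
      = ((g₀ : CircleDeg1Lift) (HH h (2 * t)) + (g₁ : CircleDeg1Lift) (2 * t - HH h (2 * t))) / 2 := rfl

lemma key (g₀ g₁ : CircleDeg1Liftˣ)
    (hsc : ∀ z, h ((g₀ : CircleDeg1Lift) z) = (g₁ : CircleDeg1Lift) (h z)) (s : ℝ) :
    HH h ((g₀ : CircleDeg1Lift) (HH h s) + (g₁ : CircleDeg1Lift) (s - HH h s))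
      = (g₀ : CircleDeg1Lift) (HH h s) :=
  gam_HH_eq h (gam_conj h g₀ g₁ hsc (gam_HH h s))

lemma two_mul_half (a b : ℝ) : 2 * ((a + b) / 2) = a + b := by ring

lemma bup0_semiconj (g₀ g₁ : CircleDeg1Liftˣ)
    (hsc : ∀ z, h ((g₀ : CircleDeg1Lift) z) = (g₁ : CircleDeg1Lift) (h z)) :
    bup0 h * bupr h g₀ g₁ = (g₀ : CircleDeg1Lift) * bup0 h := by
  ext t
  simp only [CircleDeg1Lift.mul_apply, bup0_apply, bupr_apply]
  rw [two_mul_half]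
  exact key h g₀ g₁ hsc (2 * t)

lemma bup1_semiconj (g₀ g₁ : CircleDeg1Liftˣ)
    (hsc : ∀ z, h ((g₀ : CircleDeg1Lift) z) = (g₁ : CircleDeg1Lift) (h z)) :
    bup1 h * bupr h g₀ g₁ = (g₁ : CircleDeg1Lift) * bup1 h := by
  ext t
  simp only [CircleDeg1Lift.mul_apply, bup1_apply, bupr_apply]
  rw [two_mul_half, key h g₀ g₁ hsc (2 * t)]
  ring

lemma bup0_surjective : Function.Surjective ⇑(bup0 h) := fun x =>
  ⟨(x + h x) / 2, by
    simp only [bup0_apply]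
    rw [two_mul_half]
    exact HH_map h x⟩

lemma bup1_surjective : Function.Surjective ⇑(bup1 h) := fun y => by
  obtain ⟨x, hx⟩ := exists_gam h y
  refine ⟨(x + y) / 2, ?_⟩
  simp only [bup1_apply]
  rw [two_mul_half, gam_HH_eq h hx]
  ring

section Bdown

variable (h₀ h₁ : CircleDeg1Lift)

lemma T_nonempty (hs : Function.Surjective ⇑h₀) (x : ℝ) : ((⇑h₁) '' {y | h₀ y ≤ x}).Nonempty := by
  obtain ⟨y, hy⟩ := hs x
  exact ⟨h₁ y, y, le_of_eq hy, rfl⟩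

lemma T_bddAbove (x : ℝ) : BddAbove ((⇑h₁) '' {y | h₀ y ≤ x}) := by
  refine ⟨h₁ (x - h₀ 0 + 1), ?_⟩
  rintro z ⟨y, hy, rfl⟩
  have h1 := le_map h₀ y
  have h2 : h₀ y ≤ x := hy
  exact h₁.mono (by linarith)

noncomputable def bdown (hs : Function.Surjective ⇑h₀) : CircleDeg1Lift :=
  ⟨⟨fun x => sSup ((⇑h₁) '' {y | h₀ y ≤ x}), fun a b hab =>
      csSup_le_csSup (T_bddAbove h₀ h₁ b) (T_nonempty h₀ h₁ hs a)
        (Set.image_mono fun y hy => le_trans hy hab)⟩, fun x => by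
    show sSup ((⇑h₁) '' {y | h₀ y ≤ x + 1}) = sSup ((⇑h₁) '' {y | h₀ y ≤ x}) + 1
    apply le_antisymm
    · refine csSup_le (T_nonempty h₀ h₁ hs (x + 1)) ?_
      rintro z ⟨y, hy, rfl⟩
      have hy' : h₀ y ≤ x + 1 := hy
      have e0 : h₀ (y - 1 + 1) = h₀ (y - 1) + 1 := h₀.map_add_one _
      have e1 : h₁ (y - 1 + 1) = h₁ (y - 1) + 1 := h₁.map_add_one _
      rw [show y - 1 + 1 = y by ring] at e0 e1
      have hmem : h₁ (y - 1) ∈ (⇑h₁) '' {y | h₀ y ≤ x} := ⟨y - 1, by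
        simp only [Set.mem_setOf_eq]; linarith, rfl⟩
      have := le_csSup (T_bddAbove h₀ h₁ x) hmem
      linarith
    · have key : sSup ((⇑h₁) '' {y | h₀ y ≤ x}) ≤ sSup ((⇑h₁) '' {y | h₀ y ≤ x + 1}) - 1 := by
        refine csSup_le (T_nonempty h₀ h₁ hs x) ?_
        rintro z ⟨y, hy, rfl⟩
        have hy' : h₀ y ≤ x := hy
        have e0 : h₀ (y + 1) = h₀ y + 1 := h₀.map_add_one _
        have e1 : h₁ (y + 1) = h₁ y + 1 := h₁.map_add_one _
        have hmem : h₁ (y + 1) ∈ (⇑h₁) '' {y | h₀ y ≤ x + 1} := ⟨y + 1, by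
          simp only [Set.mem_setOf_eq]; linarith, rfl⟩
        have := le_csSup (T_bddAbove h₀ h₁ (x + 1)) hmem
        linarith
      linarith⟩

@[simp] lemma bdown_apply (hs : Function.Surjective ⇑h₀) (x : ℝ) : bdown h₀ h₁ hs x = sSup ((⇑h₁) '' {y | h₀ y ≤ x}) := rfl

lemma unit_csSup (u : CircleDeg1Liftˣ) {T : Set ℝ} (hne : T.Nonempty) (hbdd : BddAbove T) :
    (u : CircleDeg1Lift) (sSup T) = sSup ((⇑(u : CircleDeg1Lift)) '' T) := by
  have := (CircleDeg1Lift.toOrderIso u).map_csSup' hne hbdd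
  simpa using this

lemma bdown_semiconj (hs : Function.Surjective ⇑h₀) (g g₀ g₁ : CircleDeg1Liftˣ)
    (hc₀ : ∀ z, h₀ ((g : CircleDeg1Lift) z) = (g₀ : CircleDeg1Lift) (h₀ z))
    (hc₁ : ∀ z, h₁ ((g : CircleDeg1Lift) z) = (g₁ : CircleDeg1Lift) (h₁ z)) (x : ℝ) :
    bdown h₀ h₁ hs ((g₀ : CircleDeg1Lift) x) = (g₁ : CircleDeg1Lift) (bdown h₀ h₁ hs x) := by
  have hset : {y | h₀ y ≤ (g₀ : CircleDeg1Lift) x} = (⇑(g : CircleDeg1Lift)) '' {y | h₀ y ≤ x} := by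
    ext y
    simp only [Set.mem_setOf_eq, Set.mem_image]
    constructor
    · intro hy
      refine ⟨((g⁻¹ : CircleDeg1Liftˣ) : CircleDeg1Lift) y, ?_, CircleDeg1Lift.units_apply_inv_apply g y⟩
      have e : h₀ ((g : CircleDeg1Lift) (((g⁻¹ : CircleDeg1Liftˣ) : CircleDeg1Lift) y))
          = (g₀ : CircleDeg1Lift) (h₀ (((g⁻¹ : CircleDeg1Liftˣ) : CircleDeg1Lift) y)) := hc₀ _
      rw [CircleDeg1Lift.units_apply_inv_apply] at e
      have h1 : (g₀ : CircleDeg1Lift) (h₀ (((g⁻¹ : CircleDeg1Liftˣ) : CircleDeg1Lift) y))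
          ≤ (g₀ : CircleDeg1Lift) x := by rw [← e]; exact hy
      have h2 := ((g₀⁻¹ : CircleDeg1Liftˣ) : CircleDeg1Lift).mono h1
      rwa [CircleDeg1Lift.units_inv_apply_apply, CircleDeg1Lift.units_inv_apply_apply] at h2
    · rintro ⟨y', hy', rfl⟩
      rw [hc₀ y']
      exact (g₀ : CircleDeg1Lift).mono hy'
  have himg : (⇑h₁) '' ((⇑(g : CircleDeg1Lift)) '' {y | h₀ y ≤ x})
      = (⇑(g₁ : CircleDeg1Lift)) '' ((⇑h₁) '' {y | h₀ y ≤ x}) := by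
    rw [Set.image_image, Set.image_image]
    exact Set.image_congr fun y _ => hc₁ y
  simp only [bdown_apply]
  rw [hset, himg, unit_csSup g₁ (T_nonempty h₀ h₁ hs x) (T_bddAbove h₀ h₁ x)]

end Bdown

end CircleDeg1LiftBlowup

open CircleDeg1LiftBlowup

/-- Semi-conjugacy of actions of a countable group `L` by elements of
`Homeo_ℤ(ℝ) = CircleDeg1Liftˣ` via a (possibly discontinuous) monotone degree-one map is
equivalent to the existence of a common "blow-up": an action `ρ : L → Homeo_ℤ(ℝ)` together
with surjective monotone degree-one maps `h₀, h₁` semi-conjugating `ρ` to `ρ₀` and `ρ₁`. -/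
theorem circleDeg1Lift_semiconjugacy_common_blowup {L : Type*} [Group L] [Countable L]
    (ρ₀ ρ₁ : L →* CircleDeg1Liftˣ) :
    (∃ h : CircleDeg1Lift,
        ∀ g : L, h * (ρ₀ g : CircleDeg1Lift) = (ρ₁ g : CircleDeg1Lift) * h) ↔
    (∃ ρ : L →* CircleDeg1Liftˣ, ∃ h₀ h₁ : CircleDeg1Lift,
        Function.Surjective ⇑h₀ ∧ Function.Surjective ⇑h₁ ∧
        (∀ g : L, h₀ * (ρ g : CircleDeg1Lift) = (ρ₀ g : CircleDeg1Lift) * h₀) ∧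
        (∀ g : L, h₁ * (ρ g : CircleDeg1Lift) = (ρ₁ g : CircleDeg1Lift) * h₁)) := by
  constructor
  · rintro ⟨h, hcon⟩
    have hsc : ∀ (g : L) (z : ℝ), h ((ρ₀ g : CircleDeg1Lift) z) = (ρ₁ g : CircleDeg1Lift) (h z) :=
      fun g z => by
        have := DFunLike.congr_fun (hcon g) z
        simpa [CircleDeg1Lift.mul_apply] using this
    set ρfun : L →* CircleDeg1Lift :=
      { toFun := fun g => bupr h (ρ₀ g) (ρ₁ g)
        map_one' := by
          ext t
          simp only [bupr_apply, map_one, Units.val_one, CircleDeg1Lift.coe_one, id_eq]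
          ring_nf
        map_mul' := fun g g' => by
          ext t
          simp only [CircleDeg1Lift.mul_apply, bupr_apply, map_mul, Units.val_mul]
          rw [two_mul_half, key h (ρ₀ g') (ρ₁ g') (hsc g') (2 * t), add_sub_cancel_left] } with hρfun
    refine ⟨ρfun.toHomUnits, bup0 h, bup1 h, bup0_surjective h, bup1_surjective h, fun g => ?_,
      fun g => ?_⟩
    · rw [MonoidHom.coe_toHomUnits]
      exact bup0_semiconj h (ρ₀ g) (ρ₁ g) (hsc g)
    · rw [MonoidHom.coe_toHomUnits]
      exact bup1_semiconj h (ρ₀ g) (ρ₁ g) (hsc g)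
  · rintro ⟨ρ, h₀, h₁, hs₀, hs₁, hc₀, hc₁⟩
    refine ⟨bdown h₀ h₁ hs₀, fun g => ?_⟩
    ext x
    simp only [CircleDeg1Lift.mul_apply]
    exact bdown_semiconj h₀ h₁ hs₀ (ρ g) (ρ₀ g) (ρ₁ g)
      (fun z => by have := DFunLike.congr_fun (hc₀ g) z; simpa using this)
      (fun z => by have := DFunLike.congr_fun (hc₁ g) z; simpa using this) x
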